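/- Suppose p ≥ 5. If (g,[p]) is a restricted Lie algebra over k, then the quotient restricted Lie algebra g/C(g) is admissible, i.e., N_3(g/C(g)) ⊆ V(g/C(g)) and exp(N_3(g/C(g))) ⊆ Aut_p(g/C(g)). -/

import Mathlib

noncomputable section

namespace ElemAb

variable (p : ℕ) (k : Type) [Field k]

/-- The algebra of polynomial functions on a `k`-vector space `V`: the subalgebra of
`V → k` generated by the linear functionals. -/
def polyFuns (V : Type) [AddCommGroup V] [Module k V] : Subalgebra k (V → k) :=
  Algebra.adjoin k {f : V → k | ∃ φ : V →ₗ[k] k, f = ⇑φ}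

/-- The Zariski topology on a `k`-vector space: the topology generated by the complements of
zero sets of polynomial functions. -/
def zar (V : Type) [AddCommGroup V] [Module k V] : TopologicalSpace V :=
  TopologicalSpace.generateFrom {U | ∃ f ∈ polyFuns k V, U = {x | f x ≠ 0}}

variable (L : Type) [LieRing L] [LieAlgebra k L]

/-- A restricted Lie algebra structure (`p`-map) on the Lie algebra `L`:  a map
`x ↦ x^[p]` having the formal properties of a `p`-th power map, namely
`(t • x)^[p] = t^p • x^[p]`, additivity on commuting elements (and, in general, additivity up
to a correction term lying in the subalgebra generated by the two elements), and
`ad (x^[p]) = (ad x)^p`. -/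
structure pStructure : Type where
  pmap : L → L
  pmap_smul : ∀ (t : k) (x : L), pmap (t • x) = t ^ p • pmap x
  pmap_add_of_comm : ∀ x y : L, ⁅x, y⁆ = 0 → pmap (x + y) = pmap x + pmap y
  pmap_add_mem : ∀ x y : L, pmap (x + y) - pmap x - pmap y ∈ LieSubalgebra.lieSpan k L {x, y}
  ad_pmap : ∀ x y : L, ⁅pmap x, y⁆ = ((LieAlgebra.ad k L x) ^ p) y

variable {p k L}

/-- The (restricted) nullcone `V(g) = {x | x^[p] = 0}`. -/
def pStructure.null (P : pStructure p k L) : Set L := {x | P.pmap x = 0}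

/-- A submodule is an elementary abelian subalgebra if it is abelian (hence a subalgebra) and
the `p`-map vanishes on it. -/
def pStructure.IsElemAbelian (P : pStructure p k L) (e : Submodule k L) : Prop :=
  (∀ x ∈ e, ∀ y ∈ e, ⁅x, y⁆ = (0 : L)) ∧ ∀ x ∈ e, P.pmap x = 0

/-- `E(r, g)`: the `r`-dimensional elementary abelian subalgebras contained in the carrier
set `g` (take `g = Set.univ` for the whole algebra), as a set of submodules. -/
def pStructure.elemSet (P : pStructure p k L) (g : Set L) (r : ℕ) : Set (Submodule k L) :=
  {e | (e : Set L) ⊆ g ∧ Module.finrank k ↥e = r ∧ P.IsElemAbelian e}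

/-- Pairs of linearly independent vectors spanning a member of a given collection `C` of
two-dimensional subspaces. -/
def planePairs (C : Set (Submodule k L)) : Set (L × L) :=
  {z | LinearIndependent k ![z.1, z.2] ∧ Submodule.span k (Set.range ![z.1, z.2]) ∈ C}

/-- The canonical (quotient) map from spanning pairs to planes. -/
def planeMk (C : Set (Submodule k L)) (z : planePairs C) : ↥C :=
  ⟨Submodule.span k (Set.range ![z.val.1, z.val.2]), z.prop.2⟩

/-- The Zariski topology on a collection of two-dimensional subspaces (e.g. `E(2,g)` or
`Gr₂(g)^{V(g)}`), defined as the quotient topology induced from the Zariski topology on the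
variety of spanning pairs. -/
def planeTop (C : Set (Submodule k L)) : TopologicalSpace ↥C :=
  TopologicalSpace.coinduced (planeMk C)
    (TopologicalSpace.induced Subtype.val (zar k (L × L)))

/-- The statement that the projective variety `E(2, g)` is connected (the empty space counts
as connected). -/
def pStructure.EIsConnected (P : pStructure p k L) (g : Set L) : Prop :=
  @IsPreconnected ↥(P.elemSet g 2) (planeTop (P.elemSet g 2)) Set.univ

/-- `N_i(g) = {x | (ad x)^i = 0}`. -/
def Ncal (i : ℕ) : Set L := {x | (LieAlgebra.ad k L x) ^ i = 0}

/-- The truncated exponential `exp x = ∑_{i<p} (ad x)^i / i!`. -/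
def expAd (x : L) : Module.End k L :=
  ∑ i ∈ Finset.range p, (i.factorial : k)⁻¹ • ((LieAlgebra.ad k L x) ^ i)

/-- Automorphisms of the Lie algebra `L` (as linear endomorphisms). -/
def IsLieAut (f : Module.End k L) : Prop :=
  Function.Bijective f ∧ ∀ x y : L, f ⁅x, y⁆ = ⁅f x, f y⁆

/-- Automorphisms of the restricted Lie algebra `(L, [p])`, i.e. automorphisms commuting with
the `p`-map (the group `Aut_p(g)`). -/
def pStructure.IspAut (P : pStructure p k L) (f : Module.End k L) : Prop :=
  IsLieAut f ∧ ∀ x : L, f (P.pmap x) = P.pmap (f x)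

/-- A restricted Lie algebra is admissible if `N₃(g) ⊆ V(g)` and `exp(N₃(g)) ⊆ Aut_p(g)`. -/
def pStructure.IsAdmissible (P : pStructure p k L) : Prop :=
  Ncal (k := k) 3 ⊆ P.null ∧ ∀ x ∈ Ncal (k := k) (L := L) 3, P.IspAut (expAd (p := p) x)

end ElemAb

open ElemAb

section AuxAlg

variable {k : Type} [Field k] {A : Type} [Ring A] [Algebra k A]

lemma aux_cancel {c : k} (hc : c ≠ 0) {u v : A} (h : c • u = c • v) : u = v := by
  have := congrArg (fun w => c⁻¹ • w) h
  simpa [smul_smul, inv_mul_cancel₀ hc] using this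

lemma aux_num_mul (n : ℕ) [n.AtLeastTwo] (x : A) :
    (OfNat.ofNat n : A) * x = (OfNat.ofNat n : k) • x := by
  rw [Algebra.smul_def, map_ofNat]

lemma aux_unit (a : A) (ha : a ^ 4 = 0) :
    (6 + 6 * a + 3 * a ^ 2 + a ^ 3) * (6 - 6 * a + 3 * a ^ 2 - a ^ 3) = 36 := by
  have expand : (6 + 6 * a + 3 * a ^ 2 + a ^ 3) * (6 - 6 * a + 3 * a ^ 2 - a ^ 3)
      = (6 : A) * 6 - 3 * a ^ 4 - a ^ 2 * a ^ 4 := by noncomm_ring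
  rw [expand, ha]
  norm_num

lemma aux_conj (h2 : (2 : k) ≠ 0) (h3 : (3 : k) ≠ 0) (a b : A)
    (ha : a ^ 4 = 0) (r0 : b * a ^ 3 = 0)
    (r1 : a ^ 3 * b = 3 * (a ^ 2 * b * a) - 3 * (a * b * a ^ 2)) :
    (6 + 6 * a + 3 * a ^ 2 + a ^ 3) * b * (6 - 6 * a + 3 * a ^ 2 - a ^ 3) =
      36 * b + 36 * (a * b) - 36 * (b * a) + 18 * (a ^ 2 * b) - 36 * (a * b * a)
        + 18 * (b * a ^ 2) := by
  have z1 : a * b * a ^ 3 = 0 := by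
    have h : a * b * a ^ 3 = a * (b * a ^ 3) := by noncomm_ring
    rw [h, r0, mul_zero]
  have z2 : a ^ 2 * b * a ^ 3 = 0 := by
    have h : a ^ 2 * b * a ^ 3 = a ^ 2 * (b * a ^ 3) := by noncomm_ring
    rw [h, r0, mul_zero]
  have z3 : a ^ 3 * b * a ^ 3 = 0 := by
    have h : a ^ 3 * b * a ^ 3 = a ^ 3 * (b * a ^ 3) := by noncomm_ring
    rw [h, r0, mul_zero]
  have e2 : a ^ 3 * b * a = 3 * (a ^ 2 * b * a ^ 2) := by
    calc a ^ 3 * b * a = (a ^ 3 * b) * a := by noncomm_ring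
      _ = (3 * (a ^ 2 * b * a) - 3 * (a * b * a ^ 2)) * a := by rw [r1]
      _ = 3 * (a ^ 2 * b * a ^ 2) - 3 * (a * b * a ^ 3) := by noncomm_ring
      _ = 3 * (a ^ 2 * b * a ^ 2) := by rw [z1, mul_zero, sub_zero]
  have e1 : a ^ 3 * b * a = a ^ 2 * b * a ^ 2 := by
    have h : (0 : A) = 3 * (a ^ 3 * b * a) - 3 * (a ^ 2 * b * a ^ 2) := by
      calc (0 : A) = a ^ 4 * b := by rw [ha, zero_mul]
        _ = a * (a ^ 3 * b) := by noncomm_ring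
        _ = a * (3 * (a ^ 2 * b * a) - 3 * (a * b * a ^ 2)) := by rw [r1]
        _ = 3 * (a ^ 3 * b * a) - 3 * (a ^ 2 * b * a ^ 2) := by noncomm_ring
    have h0 : (3 : A) * (a ^ 3 * b * a) = (3 : A) * (a ^ 2 * b * a ^ 2) :=
      sub_eq_zero.mp h.symm
    rw [aux_num_mul (k := k) 3, aux_num_mul (k := k) 3] at h0
    exact aux_cancel h3 h0
  have z4 : a ^ 2 * b * a ^ 2 = 0 := by
    have h : a ^ 2 * b * a ^ 2 = 3 * (a ^ 2 * b * a ^ 2) := by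
      conv_lhs => rw [← e1]
      exact e2
    have h0 : (2 : A) * (a ^ 2 * b * a ^ 2) = (2 : A) * 0 := by
      calc (2 : A) * (a ^ 2 * b * a ^ 2)
          = 3 * (a ^ 2 * b * a ^ 2) - a ^ 2 * b * a ^ 2 := by noncomm_ring
        _ = a ^ 2 * b * a ^ 2 - a ^ 2 * b * a ^ 2 := by rw [← h]
        _ = (2 : A) * 0 := by rw [sub_self, mul_zero]
    rw [aux_num_mul (k := k) 2, aux_num_mul (k := k) 2] at h0
    exact aux_cancel h2 h0
  have z5 : a ^ 3 * b * a = 0 := by rw [e1, z4]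
  have z6 : a ^ 3 * b * a ^ 2 = 0 := by
    have h : a ^ 3 * b * a ^ 2 = (a ^ 3 * b * a) * a := by noncomm_ring
    rw [h, z5, zero_mul]
  have r1' : a ^ 3 * b - (3 * (a ^ 2 * b * a) - 3 * (a * b * a ^ 2)) = 0 :=
    sub_eq_zero.mpr r1
  have expand :
      (6 + 6 * a + 3 * a ^ 2 + a ^ 3) * b * (6 - 6 * a + 3 * a ^ 2 - a ^ 3) =
      (36 * b + 36 * (a * b) - 36 * (b * a) + 18 * (a ^ 2 * b) - 36 * (a * b * a)
        + 18 * (b * a ^ 2))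
      + (6 * (a ^ 3 * b - (3 * (a ^ 2 * b * a) - 3 * (a * b * a ^ 2)))
        + 9 * (a ^ 2 * b * a ^ 2) - 6 * (a ^ 3 * b * a) + 3 * (a ^ 3 * b * a ^ 2)
        - 6 * (b * a ^ 3) - 6 * (a * b * a ^ 3) - 3 * (a ^ 2 * b * a ^ 3)
        - a ^ 3 * b * a ^ 3) := by noncomm_ring
  rw [expand, r1', z4, z5, z6, r0, z1, z2, z3]
  simp

lemma aux_conj_pow (g b h : A) (hgh : g * h = 1) (hhg : h * g = 1) (n : ℕ) :
    (g * b * h) ^ n = g * b ^ n * h := by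
  induction n with
  | zero => simpa using hgh.symm
  | succ n ih =>
    rw [pow_succ, ih]
    have e : g * b ^ n * h * (g * b * h) = g * b ^ n * (h * g) * (b * h) := by
      noncomm_ring
    rw [e, hhg, mul_one]
    noncomm_ring

lemma aux_unit' (h2 : (2 : k) ≠ 0) (h3 : (3 : k) ≠ 0) (a : A) (ha : a ^ 4 = 0) :
    ((6 : k)⁻¹ • (6 + 6 * a + 3 * a ^ 2 + a ^ 3)) *
      ((6 : k)⁻¹ • (6 - 6 * a + 3 * a ^ 2 - a ^ 3)) = 1 := by
  have h6 : (6 : k) ≠ 0 := by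
    have : (6 : k) = 2 * 3 := by norm_num
    rw [this]; exact mul_ne_zero h2 h3
  rw [smul_mul_assoc, mul_smul_comm, aux_unit a ha, smul_smul]
  have h36 : (36 : A) = (36 : k) • (1 : A) := by
    have := aux_num_mul (k := k) 36 (1 : A)
    simpa using this
  rw [h36, smul_smul]
  have : (6 : k)⁻¹ * (6 : k)⁻¹ * 36 = 1 := by
    field_simp
    norm_num
  rw [this, one_smul]

lemma aux_conj' (h2 : (2 : k) ≠ 0) (h3 : (3 : k) ≠ 0) (a b : A)
    (ha : a ^ 4 = 0) (r0 : b * a ^ 3 = 0)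
    (r1 : a ^ 3 * b = 3 * (a ^ 2 * b * a) - 3 * (a * b * a ^ 2)) :
    ((6 : k)⁻¹ • (6 + 6 * a + 3 * a ^ 2 + a ^ 3)) * b *
      ((6 : k)⁻¹ • (6 - 6 * a + 3 * a ^ 2 - a ^ 3)) =
    b + (a * b - b * a) + (2 : k)⁻¹ • (a * (a * b - b * a) - (a * b - b * a) * a) := by
  have h6 : (6 : k) ≠ 0 := by
    have : (6 : k) = 2 * 3 := by norm_num
    rw [this]; exact mul_ne_zero h2 h3
  rw [smul_mul_assoc, smul_mul_assoc, mul_smul_comm, smul_smul,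
    aux_conj h2 h3 a b ha r0 r1]
  have n1 : a * (a * b) = a ^ 2 * b := by noncomm_ring
  have n2 : a * (b * a) = a * b * a := by noncomm_ring
  have n3 : (a * b - b * a) * a = a * b * a - b * a ^ 2 := by noncomm_ring
  rw [mul_sub, n1, n2, n3]
  rw [aux_num_mul (k := k) 36 b, aux_num_mul (k := k) 36 (a * b),
    aux_num_mul (k := k) 36 (b * a), aux_num_mul (k := k) 18 (a ^ 2 * b),
    aux_num_mul (k := k) 36 (a * b * a), aux_num_mul (k := k) 18 (b * a ^ 2)]
  match_scalars <;> field_simp <;> norm_num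

end AuxAlg

section AuxLie

attribute [local instance 100] LieRing.ofAssociativeRing

variable {p : ℕ} {k : Type} [Field k] {L : Type} [LieRing L] [LieAlgebra k L]

lemma aux_mem_center {m : L} (h : ∀ z : L, ⁅z, m⁆ = 0) : m ∈ LieAlgebra.center k L :=
  (LieModule.mem_maxTrivSubmodule k L L m).mpr h

lemma aux_center_lie {m : L} (hm : m ∈ LieAlgebra.center k L) (z : L) : ⁅z, m⁆ = 0 :=
  (LieModule.mem_maxTrivSubmodule k L L m).mp hm z

lemma aux_center_lie' {m : L} (hm : m ∈ LieAlgebra.center k L) (z : L) : ⁅m, z⁆ = 0 := by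
  rw [← lie_skew, aux_center_lie hm, neg_zero]

lemma aux_ad_center {m : L} (hm : m ∈ LieAlgebra.center k L) :
    LieAlgebra.ad k L m = 0 := by
  ext w
  simp [LieAlgebra.ad_apply, aux_center_lie' hm]

lemma aux_pow3_apply {M : Type} [AddCommGroup M] [Module k M]
    (f : Module.End k M) (v : M) : (f ^ 3) v = f (f (f v)) := by
  simp [pow_succ, Module.End.mul_apply]

lemma aux_pow2_apply {M : Type} [AddCommGroup M] [Module k M]
    (f : Module.End k M) (v : M) : (f ^ 2) v = f (f v) := by
  simp [pow_succ, Module.End.mul_apply]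

lemma aux_half {M : Type} [AddCommGroup M] [Module k M] (h2 : (2 : k) ≠ 0) (v : M) :
    (2 : k)⁻¹ • (v + v) = v := by
  rw [← two_smul k v, smul_smul, inv_mul_cancel₀ h2, one_smul]

lemma aux_exp_inv (h2 : (2 : k) ≠ 0) (x : L) (hx3 : ∀ v : L, ⁅x, ⁅x, ⁅x, v⁆⁆⁆ = 0)
    (v : L) :
    (v + ⁅x, v⁆ + (2 : k)⁻¹ • ⁅x, ⁅x, v⁆⁆)
      - ⁅x, v + ⁅x, v⁆ + (2 : k)⁻¹ • ⁅x, ⁅x, v⁆⁆⁆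
      + (2 : k)⁻¹ • ⁅x, ⁅x, v + ⁅x, v⁆ + (2 : k)⁻¹ • ⁅x, ⁅x, v⁆⁆⁆⁆ = v := by
  have hx4 : ⁅x, ⁅x, ⁅x, ⁅x, v⁆⁆⁆⁆ = 0 := by rw [hx3 v, lie_zero]
  simp only [lie_add, lie_smul, hx3 v, hx4, smul_zero, add_zero, lie_zero]
  have key : (2 : k)⁻¹ • ⁅x, ⁅x, v⁆⁆ + (2 : k)⁻¹ • ⁅x, ⁅x, v⁆⁆ = ⁅x, ⁅x, v⁆⁆ := by
    rw [← smul_add, aux_half h2]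
  linear_combination (norm := module) key

lemma aux_exp_inv' (h2 : (2 : k) ≠ 0) (x : L) (hx3 : ∀ v : L, ⁅x, ⁅x, ⁅x, v⁆⁆⁆ = 0)
    (v : L) :
    (v - ⁅x, v⁆ + (2 : k)⁻¹ • ⁅x, ⁅x, v⁆⁆)
      + ⁅x, v - ⁅x, v⁆ + (2 : k)⁻¹ • ⁅x, ⁅x, v⁆⁆⁆
      + (2 : k)⁻¹ • ⁅x, ⁅x, v - ⁅x, v⁆ + (2 : k)⁻¹ • ⁅x, ⁅x, v⁆⁆⁆⁆ = v := by
  have hx4 : ⁅x, ⁅x, ⁅x, ⁅x, v⁆⁆⁆⁆ = 0 := by rw [hx3 v, lie_zero]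
  simp only [lie_add, lie_sub, lie_smul, hx3 v, hx4, smul_zero, add_zero, lie_zero,
    sub_zero]
  have key : (2 : k)⁻¹ • ⁅x, ⁅x, v⁆⁆ + (2 : k)⁻¹ • ⁅x, ⁅x, v⁆⁆ = ⁅x, ⁅x, v⁆⁆ := by
    rw [← smul_add, aux_half h2]
  linear_combination (norm := module) key

lemma aux_exp_bracket (h2 : (2 : k) ≠ 0) (h3 : (3 : k) ≠ 0) (x : L)
    (hx3 : ∀ v : L, ⁅x, ⁅x, ⁅x, v⁆⁆⁆ = 0) (z w : L) :
    ⁅z, w⁆ + ⁅x, ⁅z, w⁆⁆ + (2 : k)⁻¹ • ⁅x, ⁅x, ⁅z, w⁆⁆⁆ =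
      ⁅z + ⁅x, z⁆ + (2 : k)⁻¹ • ⁅x, ⁅x, z⁆⁆, w + ⁅x, w⁆ + (2 : k)⁻¹ • ⁅x, ⁅x, w⁆⁆⁆ := by
  have L1 : ⁅x, ⁅z, w⁆⁆ = ⁅⁅x, z⁆, w⁆ + ⁅z, ⁅x, w⁆⁆ := leibniz_lie x z w
  have L2 : ⁅x, ⁅x, ⁅z, w⁆⁆⁆ =
      ⁅⁅x, ⁅x, z⁆⁆, w⁆ + ⁅⁅x, z⁆, ⁅x, w⁆⁆ + (⁅⁅x, z⁆, ⁅x, w⁆⁆ + ⁅z, ⁅x, ⁅x, w⁆⁆⁆) := by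
    rw [L1, lie_add, leibniz_lie x ⁅x, z⁆ w, leibniz_lie x z ⁅x, w⁆]
  have s0 : ⁅⁅x, ⁅x, z⁆⁆, ⁅x, w⁆⁆ + ⁅⁅x, z⁆, ⁅x, ⁅x, w⁆⁆⁆ = 0 := by
    have h := hx3 ⁅z, w⁆
    rw [L2] at h
    simp only [lie_add] at h
    rw [leibniz_lie x ⁅x, ⁅x, z⁆⁆ w,
      leibniz_lie x ⁅x, z⁆ ⁅x, w⁆, leibniz_lie x z ⁅x, ⁅x, w⁆⁆,
      hx3 z, hx3 w, zero_lie, lie_zero] at h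
    have h3' : (3 : k) • (⁅⁅x, ⁅x, z⁆⁆, ⁅x, w⁆⁆ + ⁅⁅x, z⁆, ⁅x, ⁅x, w⁆⁆⁆) = 0 := by
      rw [← h]
      module
    exact (smul_eq_zero.mp h3').resolve_left h3
  have s1 : ⁅⁅x, ⁅x, z⁆⁆, ⁅x, ⁅x, w⁆⁆⁆ = 0 := by
    have h := congrArg (fun m => ⁅x, m⁆) s0
    simp only [lie_add, lie_zero] at h
    rw [leibniz_lie x ⁅x, ⁅x, z⁆⁆ ⁅x, w⁆, leibniz_lie x ⁅x, z⁆ ⁅x, ⁅x, w⁆⁆,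
      hx3 z, hx3 w, zero_lie, lie_zero, add_zero, zero_add] at h
    have h2' : (2 : k) • ⁅⁅x, ⁅x, z⁆⁆, ⁅x, ⁅x, w⁆⁆⁆ = 0 := by
      rw [← h]
      module
    exact (smul_eq_zero.mp h2').resolve_left h2
  have key : (2 : k)⁻¹ • (⁅⁅x, z⁆, ⁅x, w⁆⁆ + ⁅⁅x, z⁆, ⁅x, w⁆⁆) = ⁅⁅x, z⁆, ⁅x, w⁆⁆ :=
    aux_half h2 _
  rw [L2, L1]
  simp only [add_lie, lie_add, smul_lie, lie_smul]
  linear_combination (norm := module) key - ((2:k)⁻¹) • s0 - ((2:k)⁻¹ * (2:k)⁻¹) • s1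

lemma aux_main (h2 : (2 : k) ≠ 0) (h3 : (3 : k) ≠ 0) (hp5 : 5 ≤ p)
    (x : L) (hc : ∀ y : L, ⁅x, ⁅x, ⁅x, y⁆⁆⁆ ∈ LieAlgebra.center k L)
    (P : ElemAb.pStructure p k L) :
    P.pmap x ∈ LieAlgebra.center k L ∧
      ∀ y : L,
        (P.pmap y + ⁅x, P.pmap y⁆ + (2 : k)⁻¹ • ⁅x, ⁅x, P.pmap y⁆⁆)
          - P.pmap (y + ⁅x, y⁆ + (2 : k)⁻¹ • ⁅x, ⁅x, y⁆⁆) ∈ LieAlgebra.center k L := by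
  set a := LieAlgebra.ad k L x with ha_def
  have hpow3 : ∀ v : L, (a ^ 3) v = ⁅x, ⁅x, ⁅x, v⁆⁆⁆ := fun v => by
    rw [aux_pow3_apply]
    simp [ha_def, LieAlgebra.ad_apply]
  have hc' : ∀ v : L, (a ^ 3) v ∈ LieAlgebra.center k L := fun v => by
    rw [hpow3]; exact hc v
  have ha4 : a ^ 4 = 0 := by
    ext y
    have h : (a ^ 4) y = a ((a ^ 3) y) := by
      rw [pow_succ', Module.End.mul_apply]
    rw [h, ha_def, LieAlgebra.ad_apply, aux_center_lie (hc' y) x]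
    simp
  have hap : a ^ p = 0 := by
    have hp4 : p = 4 + (p - 4) := by omega
    rw [hp4, pow_add, ha4, zero_mul]
  have hadp : ∀ v : L, LieAlgebra.ad k L (P.pmap v) = (LieAlgebra.ad k L v) ^ p :=
    fun v => by
      ext w
      rw [LieAlgebra.ad_apply]
      exact P.ad_pmap v w
  have hcx : P.pmap x ∈ LieAlgebra.center k L := by
    refine aux_mem_center fun z => ?_
    have h1 : ⁅P.pmap x, z⁆ = 0 := by
      rw [P.ad_pmap x z, ← ha_def, hap]
      simp
    rw [← lie_skew, h1, neg_zero]
  refine ⟨hcx, fun y => ?_⟩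
  -- the conjugating invertible operators
  set Ep : Module.End k L := (6 : k)⁻¹ • (6 + 6 * a + 3 * a ^ 2 + a ^ 3) with hEp
  set Em : Module.End k L := (6 : k)⁻¹ • (6 - 6 * a + 3 * a ^ 2 - a ^ 3) with hEm
  have hee : Ep * Em = 1 := aux_unit' h2 h3 a ha4
  have hme : Em * Ep = 1 := by
    have hna : (-a) ^ 4 = 0 := by
      rw [Even.neg_pow (by decide : Even 4)]
      exact ha4
    have h := aux_unit' h2 h3 (-a) hna
    have e1 : (6 : Module.End k L) + 6 * (-a) + 3 * (-a) ^ 2 + (-a) ^ 3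
        = 6 - 6 * a + 3 * a ^ 2 - a ^ 3 := by noncomm_ring
    have e2 : (6 : Module.End k L) - 6 * (-a) + 3 * (-a) ^ 2 - (-a) ^ 3
        = 6 + 6 * a + 3 * a ^ 2 + a ^ 3 := by noncomm_ring
    rw [e1, e2] at h
    rw [hEm, hEp]
    exact h
  have r0 : ∀ v : L, (LieAlgebra.ad k L v) * a ^ 3 = 0 := fun v => by
    ext w
    simp only [Module.End.mul_apply, LieAlgebra.ad_apply, LinearMap.zero_apply]
    exact aux_center_lie (hc' w) v
  have r1 : ∀ v : L, a ^ 3 * (LieAlgebra.ad k L v) =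
      3 * (a ^ 2 * (LieAlgebra.ad k L v) * a) - 3 * (a * (LieAlgebra.ad k L v) * a ^ 2) := by
    intro v
    set b := LieAlgebra.ad k L v with hb
    have hz : LieAlgebra.ad k L ((a ^ 3) v) = 0 := aux_ad_center (hc' v)
    have hexp : LieAlgebra.ad k L ((a ^ 3) v)
        = a ^ 3 * b - 3 * (a ^ 2 * b * a) + 3 * (a * b * a ^ 2) - b * a ^ 3 := by
      rw [hpow3 v, LieHom.map_lie, LieHom.map_lie, LieHom.map_lie, ← ha_def, ← hb]
      simp only [Ring.lie_def]
      noncomm_ring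
    have hz2 : a ^ 3 * b - 3 * (a ^ 2 * b * a) + 3 * (a * b * a ^ 2) - b * a ^ 3 = 0 := by
      rw [← hexp, hz]
    calc a ^ 3 * b
        = (a ^ 3 * b - 3 * (a ^ 2 * b * a) + 3 * (a * b * a ^ 2) - b * a ^ 3)
          + (3 * (a ^ 2 * b * a) - 3 * (a * b * a ^ 2)) + b * a ^ 3 := by noncomm_ring
      _ = 3 * (a ^ 2 * b * a) - 3 * (a * b * a ^ 2) := by
          rw [hz2, r0 v, zero_add, add_zero]
  have conj : ∀ v : L, Ep * (LieAlgebra.ad k L v) * Em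
      = LieAlgebra.ad k L (v + ⁅x, v⁆ + (2 : k)⁻¹ • ⁅x, ⁅x, v⁆⁆) := by
    intro v
    rw [hEp, hEm, aux_conj' h2 h3 a (LieAlgebra.ad k L v) ha4 (r0 v) (r1 v)]
    rw [map_add, map_add, map_smul, LieHom.map_lie,
      LieHom.map_lie, LieHom.map_lie, ← ha_def]
    simp only [Ring.lie_def]
  have h1 : LieAlgebra.ad k L
      (P.pmap y + ⁅x, P.pmap y⁆ + (2 : k)⁻¹ • ⁅x, ⁅x, P.pmap y⁆⁆)
      = Ep * (LieAlgebra.ad k L y) ^ p * Em := by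
    rw [← conj (P.pmap y), hadp y]
  have h2' : LieAlgebra.ad k L (P.pmap (y + ⁅x, y⁆ + (2 : k)⁻¹ • ⁅x, ⁅x, y⁆⁆))
      = Ep * (LieAlgebra.ad k L y) ^ p * Em := by
    rw [hadp (y + ⁅x, y⁆ + (2 : k)⁻¹ • ⁅x, ⁅x, y⁆⁆), ← conj y]
    exact aux_conj_pow Ep (LieAlgebra.ad k L y) Em hee hme p
  refine aux_mem_center fun z => ?_
  rw [← lie_skew]
  have hadeq : ⁅P.pmap y + ⁅x, P.pmap y⁆ + (2 : k)⁻¹ • ⁅x, ⁅x, P.pmap y⁆⁆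
      - P.pmap (y + ⁅x, y⁆ + (2 : k)⁻¹ • ⁅x, ⁅x, y⁆⁆), z⁆ = 0 := by
    rw [sub_lie]
    have e1 := congrArg (fun f : Module.End k L => f z) h1
    have e2 := congrArg (fun f : Module.End k L => f z) h2'
    simp only [LieAlgebra.ad_apply] at e1 e2
    rw [e1, e2, sub_self]
  rw [hadeq, neg_zero]

end AuxLie

/-- Let `p ≥ 5`.  For any restricted Lie algebra `(g,[p])`, the quotient
`g/C(g)` (with the induced `p`-map) is admissible, i.e. `N₃(g/C(g)) ⊆ V(g/C(g))` and
`exp(N₃(g/C(g))) ⊆ Aut_p(g/C(g))`. -/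
theorem statement7
    (p : ℕ) (hp : p.Prime) (hp5 : 5 ≤ p)
    (k : Type) [Field k] [IsAlgClosed k] [CharP k p]
    (L : Type) [LieRing L] [LieAlgebra k L] [FiniteDimensional k L]
    (P : pStructure p k L)
    (Q : pStructure p k (L ⧸ LieAlgebra.center k L))
    (hQ : ∀ x : L,
      Q.pmap (LieSubmodule.Quotient.mk (N := LieAlgebra.center k L) x) =
        LieSubmodule.Quotient.mk (N := LieAlgebra.center k L) (P.pmap x)) :
    Q.IsAdmissible := by
  have hp2 : (2 : k) ≠ 0 := by
    have hd : ¬ (p ∣ 2) := fun h => by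
      have := Nat.le_of_dvd (by norm_num) h
      omega
    intro h
    exact hd ((CharP.cast_eq_zero_iff k p 2).mp (by exact_mod_cast h))
  have hp3 : (3 : k) ≠ 0 := by
    have hd : ¬ (p ∣ 3) := fun h => by
      have := Nat.le_of_dvd (by norm_num) h
      omega
    intro h
    exact hd ((CharP.cast_eq_zero_iff k p 3).mp (by exact_mod_cast h))
  constructor
  · -- N₃ ⊆ V
    intro xb hxb
    have hD : (LieAlgebra.ad k (L ⧸ LieAlgebra.center k L) xb) ^ 3 = 0 := hxb
    obtain ⟨x, rfl⟩ :=
      Submodule.Quotient.mk_surjective (LieAlgebra.center k L).toSubmodule xb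
    have hcL : ∀ y : L, ⁅x, ⁅x, ⁅x, y⁆⁆⁆ ∈ LieAlgebra.center k L := by
      intro y
      have h0 := DFunLike.congr_fun hD
        (LieSubmodule.Quotient.mk (N := LieAlgebra.center k L) y)
      rw [aux_pow3_apply] at h0
      simp only [LieAlgebra.ad_apply, LinearMap.zero_apply] at h0
      exact LieSubmodule.Quotient.mk_eq_zero'.mp h0
    have hmain := (aux_main hp2 hp3 hp5 x hcL P).1
    show Q.pmap _ = 0
    rw [hQ x]
    exact LieSubmodule.Quotient.mk_eq_zero'.mpr hmain
  · -- exp(N₃) ⊆ Aut_p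
    intro xb hxb
    have hD : (LieAlgebra.ad k (L ⧸ LieAlgebra.center k L) xb) ^ 3 = 0 := hxb
    obtain ⟨x, rfl⟩ :=
      Submodule.Quotient.mk_surjective (LieAlgebra.center k L).toSubmodule xb
    set xq : L ⧸ LieAlgebra.center k L :=
      LieSubmodule.Quotient.mk (N := LieAlgebra.center k L) x with hxq
    have hx3q : ∀ v : L ⧸ LieAlgebra.center k L, ⁅xq, ⁅xq, ⁅xq, v⁆⁆⁆ = 0 := fun v => by
      have h0 := DFunLike.congr_fun hD v
      rw [aux_pow3_apply] at h0
      simp only [LieAlgebra.ad_apply (R := k), LinearMap.zero_apply] at h0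
      exact h0
    have hfapp : ∀ v : L ⧸ LieAlgebra.center k L, (ElemAb.expAd (p := p) (k := k) xq) v
        = v + ⁅xq, v⁆ + (2 : k)⁻¹ • ⁅xq, ⁅xq, v⁆⁆ := by
      intro v
      have hvan : ∀ i ∈ Finset.range p, i ∉ Finset.range 3 →
          ((i.factorial : k)⁻¹ • (LieAlgebra.ad k (L ⧸ LieAlgebra.center k L) xq) ^ i)
            = 0 := by
        intro i _ hi
        have h3le : 3 ≤ i := by
          simp only [Finset.mem_range, not_lt] at hi
          exact hi
        have hzero : (LieAlgebra.ad k (L ⧸ LieAlgebra.center k L) xq) ^ i = 0 := by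
          have hi3 : i = 3 + (i - 3) := by omega
          rw [hi3, pow_add, hD, zero_mul]
        rw [hzero, smul_zero]
      have hsub : Finset.range 3 ⊆ Finset.range p := Finset.range_subset_range.mpr (by omega)
      have hsum : ElemAb.expAd (p := p) (k := k) xq
          = ∑ i ∈ Finset.range 3,
              (i.factorial : k)⁻¹ • (LieAlgebra.ad k (L ⧸ LieAlgebra.center k L) xq) ^ i :=
        (Finset.sum_subset hsub hvan).symm
      rw [hsum, Finset.sum_range_succ, Finset.sum_range_succ, Finset.sum_range_one]
      simp only [Nat.factorial, Nat.cast_one, inv_one, one_smul, pow_zero, pow_one,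
        Nat.mul_one, Nat.one_mul, Nat.cast_ofNat]
      rw [LinearMap.add_apply, LinearMap.add_apply, Module.End.one_apply,
        LinearMap.smul_apply, aux_pow2_apply]
      simp [LieAlgebra.ad_apply]
    refine ⟨⟨?_, ?_⟩, ?_⟩
    · -- bijective
      have hg : ∀ v, (ElemAb.expAd (p := p) (k := k) xq v) - ⁅xq, ElemAb.expAd (p := p) (k := k) xq v⁆
          + (2 : k)⁻¹ • ⁅xq, ⁅xq, ElemAb.expAd (p := p) (k := k) xq v⁆⁆ = v := fun v => by
        rw [hfapp v]
        exact aux_exp_inv hp2 xq hx3q v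
      constructor
      · intro v w h
        have h1 := hg v
        rw [h] at h1
        exact h1.symm.trans (hg w)
      · intro u
        refine ⟨u - ⁅xq, u⁆ + (2 : k)⁻¹ • ⁅xq, ⁅xq, u⁆⁆, ?_⟩
        rw [hfapp]
        exact aux_exp_inv' hp2 xq hx3q u
    · -- bracket
      intro z w
      rw [hfapp, hfapp, hfapp]
      exact aux_exp_bracket hp2 hp3 xq hx3q z w
    · -- p-map
      intro z
      obtain ⟨y, rfl⟩ :=
        Submodule.Quotient.mk_surjective (LieAlgebra.center k L).toSubmodule z
      have hcL : ∀ y : L, ⁅x, ⁅x, ⁅x, y⁆⁆⁆ ∈ LieAlgebra.center k L := by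
        intro y
        have h0 := DFunLike.congr_fun hD
          (LieSubmodule.Quotient.mk (N := LieAlgebra.center k L) y)
        rw [aux_pow3_apply] at h0
        simp only [LieAlgebra.ad_apply, LinearMap.zero_apply] at h0
        exact LieSubmodule.Quotient.mk_eq_zero'.mp h0
      have hmain := (aux_main hp2 hp3 hp5 x hcL P).2 y
      have hmk : ∀ v : L,
          (LieSubmodule.Quotient.mk (N := LieAlgebra.center k L) v)
            + ⁅xq, LieSubmodule.Quotient.mk (N := LieAlgebra.center k L) v⁆
            + (2 : k)⁻¹ • ⁅xq, ⁅xq, LieSubmodule.Quotient.mk (N := LieAlgebra.center k L) v⁆⁆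
          = LieSubmodule.Quotient.mk (N := LieAlgebra.center k L)
              (v + ⁅x, v⁆ + (2 : k)⁻¹ • ⁅x, ⁅x, v⁆⁆) := fun v => by
        rw [hxq]
        simp only [← LieSubmodule.Quotient.mk_bracket]
        simp only [Submodule.Quotient.mk_add, Submodule.Quotient.mk_smul]
      show (ElemAb.expAd (p := p) (k := k) xq)
          (Q.pmap (LieSubmodule.Quotient.mk (N := LieAlgebra.center k L) y))
        = Q.pmap ((ElemAb.expAd (p := p) (k := k) xq)
            (LieSubmodule.Quotient.mk (N := LieAlgebra.center k L) y))
      rw [hQ y, hfapp, hfapp, hmk (P.pmap y), hmk y, hQ]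
      rw [Submodule.Quotient.eq]
      exact hmain
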